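/- Let F1(x) = ε/(1+exp(α1+β1 x)) and F2(x) = 1/(1+exp(α2+β2 x)) with β1 < β2 < 0. Then the ratio R(x) = F1'(x)/F2'(x) is not monotonic on ℝ: R attains a local maximum, i.e., there exist x1 < x2 < x3 with R(x1) < R(x2) and R(x2) > R(x3). -/

import Mathlib

open Filter Real Topology

private lemma exp_lin_tendsto_zero_atTop {b : ℝ} (hb : b < 0) (a : ℝ) :
    Tendsto (fun x : ℝ => Real.exp (a + b * x)) atTop (𝓝 0) :=
  Real.tendsto_exp_atBot.comp <|
    tendsto_atBot_add_const_left _ a <| (tendsto_const_mul_atBot_of_neg hb).mpr tendsto_id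

private lemma exp_lin_tendsto_zero_atBot {b : ℝ} (hb : 0 < b) (a : ℝ) :
    Tendsto (fun x : ℝ => Real.exp (a + b * x)) atBot (𝓝 0) :=
  Real.tendsto_exp_atBot.comp <|
    tendsto_atBot_add_const_left _ a <| (tendsto_const_mul_atBot_iff_pos tendsto_id).mpr hb

/-- With F1, F2 scaled logistics and β1 < β2 < 0, the ratio
R(x) = F1'(x)/F2'(x) is not monotonic: it attains a local maximum, i.e. there exist
x1 < x2 < x3 with R(x1) < R(x2) and R(x3) < R(x2). -/
theorem stmt_12 (ε α1 α2 β1 β2 : ℝ) (hε : 0 < ε) (h12 : β1 < β2) (h2 : β2 < 0)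
    (R : ℝ → ℝ)
    (hR : ∀ x, R x =
      (-ε * β1 * Real.exp (α1 + β1 * x) / (1 + Real.exp (α1 + β1 * x)) ^ 2) /
      (-β2 * Real.exp (α2 + β2 * x) / (1 + Real.exp (α2 + β2 * x)) ^ 2)) :
    ∃ x1 x2 x3 : ℝ, x1 < x2 ∧ x2 < x3 ∧ R x1 < R x2 ∧ R x3 < R x2 := by
  have h1 : β1 < 0 := h12.trans h2
  set K : ℝ := ε * β1 / β2 with hKdef
  have hK : 0 < K := by
    rw [hKdef]
    exact div_pos_of_neg_of_neg (mul_neg_of_pos_of_neg hε h1) h2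
  -- rewrite R
  have hform : ∀ x, R x = K * ((Real.exp (α1 + β1 * x) * (1 + Real.exp (α2 + β2 * x)) ^ 2)
      / (Real.exp (α2 + β2 * x) * (1 + Real.exp (α1 + β1 * x)) ^ 2)) := by
    intro x
    have hA := Real.exp_pos (α1 + β1 * x)
    have hB := Real.exp_pos (α2 + β2 * x)
    have h1A : (0:ℝ) < 1 + Real.exp (α1 + β1 * x) := by positivity
    have h1B : (0:ℝ) < 1 + Real.exp (α2 + β2 * x) := by positivity
    rw [hR x, hKdef]
    field_simp
  have hpos : ∀ x, 0 < R x := by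
    intro x
    rw [hform x]
    have hA := Real.exp_pos (α1 + β1 * x)
    have hB := Real.exp_pos (α2 + β2 * x)
    have h1A : (0:ℝ) < 1 + Real.exp (α1 + β1 * x) := by positivity
    have h1B : (0:ℝ) < 1 + Real.exp (α2 + β2 * x) := by positivity
    positivity
  -- tendsto at top
  have htop : Tendsto R atTop (𝓝 0) := by
    set C : ℝ := 4 * K * Real.exp (α1 - α2) with hC
    have hev : ∀ᶠ x : ℝ in atTop, Real.exp (α2 + β2 * x) ≤ 1 := by
      filter_upwards [(exp_lin_tendsto_zero_atTop h2 α2).eventually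
        (ge_mem_nhds (by norm_num : (0:ℝ) < 1))] with x hx using hx
    have hub : ∀ᶠ x : ℝ in atTop, R x ≤ C * Real.exp ((β1 - β2) * x) := by
      filter_upwards [hev] with x hx
      rw [hform x]
      have hA := Real.exp_pos (α1 + β1 * x)
      have hB := Real.exp_pos (α2 + β2 * x)
      have h1A : (0:ℝ) < 1 + Real.exp (α1 + β1 * x) := by positivity
      have step : (Real.exp (α1 + β1 * x) * (1 + Real.exp (α2 + β2 * x)) ^ 2)
          / (Real.exp (α2 + β2 * x) * (1 + Real.exp (α1 + β1 * x)) ^ 2)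
          ≤ (Real.exp (α1 + β1 * x) * 4) / (Real.exp (α2 + β2 * x) * 1) := by
        gcongr
        · nlinarith [hB.le]
        · nlinarith
      calc K * _ ≤ K * ((Real.exp (α1 + β1 * x) * 4) / (Real.exp (α2 + β2 * x) * 1)) :=
            mul_le_mul_of_nonneg_left step hK.le
        _ = C * Real.exp ((β1 - β2) * x) := by
            rw [hC, mul_one,
              show (α1 + β1 * x) = (α1 - α2) + (β1 - β2) * x + (α2 + β2 * x) by ring,
              Real.exp_add, Real.exp_add]
            field_simp
    have htend : Tendsto (fun x : ℝ => C * Real.exp ((β1 - β2) * x)) atTop (𝓝 0) := by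
      have := (exp_lin_tendsto_zero_atTop (by linarith : β1 - β2 < 0) 0).const_mul C
      simpa using this
    exact squeeze_zero' (Eventually.of_forall fun x => (hpos x).le) hub htend
  have hbot : Tendsto R atBot (𝓝 0) := by
    set C : ℝ := 4 * K * Real.exp (α2 - α1) with hC
    have hevA : ∀ᶠ x : ℝ in atBot, 1 ≤ Real.exp (α1 + β1 * x) := by
      have : Tendsto (fun x : ℝ => α1 + β1 * x) atBot atTop :=
        tendsto_atTop_add_const_left _ α1 <| (tendsto_const_mul_atTop_of_neg h1).mpr tendsto_id
      filter_upwards [this.eventually_ge_atTop 0] with x hx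
      calc (1:ℝ) = Real.exp 0 := by simp
        _ ≤ _ := Real.exp_le_exp.mpr hx
    have hevB : ∀ᶠ x : ℝ in atBot, 1 ≤ Real.exp (α2 + β2 * x) := by
      have : Tendsto (fun x : ℝ => α2 + β2 * x) atBot atTop :=
        tendsto_atTop_add_const_left _ α2 <| (tendsto_const_mul_atTop_of_neg h2).mpr tendsto_id
      filter_upwards [this.eventually_ge_atTop 0] with x hx
      calc (1:ℝ) = Real.exp 0 := by simp
        _ ≤ _ := Real.exp_le_exp.mpr hx
    have hub : ∀ᶠ x : ℝ in atBot, R x ≤ C * Real.exp ((β2 - β1) * x) := by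
      filter_upwards [hevA, hevB] with x hxA hxB
      rw [hform x]
      have hA := Real.exp_pos (α1 + β1 * x)
      have hB := Real.exp_pos (α2 + β2 * x)
      have step : (Real.exp (α1 + β1 * x) * (1 + Real.exp (α2 + β2 * x)) ^ 2)
          / (Real.exp (α2 + β2 * x) * (1 + Real.exp (α1 + β1 * x)) ^ 2)
          ≤ (Real.exp (α1 + β1 * x) * (4 * Real.exp (α2 + β2 * x) ^ 2))
            / (Real.exp (α2 + β2 * x) * Real.exp (α1 + β1 * x) ^ 2) := by
        gcongr
        · nlinarith
        · nlinarith
      calc K * _ ≤ K * ((Real.exp (α1 + β1 * x) * (4 * Real.exp (α2 + β2 * x) ^ 2))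
            / (Real.exp (α2 + β2 * x) * Real.exp (α1 + β1 * x) ^ 2)) :=
            mul_le_mul_of_nonneg_left step hK.le
        _ = C * Real.exp ((β2 - β1) * x) := by
            have e1 : Real.exp (α2 + β2 * x)
                = Real.exp (α2 - α1) * Real.exp ((β2 - β1) * x) * Real.exp (α1 + β1 * x) := by
              rw [← Real.exp_add, ← Real.exp_add]; ring_nf
            have hA' := (Real.exp_pos (α1 + β1 * x)).ne'
            have hE' := (Real.exp_pos (α2 - α1)).ne'
            have hF' := (Real.exp_pos ((β2 - β1) * x)).ne'
            rw [hC, e1]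
            field_simp
    have htend : Tendsto (fun x : ℝ => C * Real.exp ((β2 - β1) * x)) atBot (𝓝 0) := by
      have := (exp_lin_tendsto_zero_atBot (by linarith : (0:ℝ) < β2 - β1) 0).const_mul C
      simpa using this
    exact squeeze_zero' (Eventually.of_forall fun x => (hpos x).le) hub htend
  -- assemble
  have hR0 : 0 < R 0 := hpos 0
  have h3 : ∀ᶠ x : ℝ in atTop, R x < R 0 := htop.eventually (gt_mem_nhds hR0)
  have hbig : ∀ᶠ x : ℝ in atTop, R x < R 0 ∧ 0 < x := h3.and (eventually_gt_atTop 0)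
  obtain ⟨x3, hx3, hx3pos⟩ := hbig.exists
  have h4 : ∀ᶠ x : ℝ in atBot, R x < R 0 := hbot.eventually (gt_mem_nhds hR0)
  have hsmall : ∀ᶠ x : ℝ in atBot, R x < R 0 ∧ x < 0 := h4.and (eventually_lt_atBot 0)
  obtain ⟨x1, hx1, hx1neg⟩ := hsmall.exists
  exact ⟨x1, 0, x3, hx1neg, hx3pos, hx1, hx3⟩
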